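/- The Petersen graph has no even perfect matching: for every perfect matching E of the Petersen graph, some cycle of the complement G − E has odd length. -/

import Mathlib

/-- The Petersen graph as the Kneser graph K(5,2): vertices are 2-element subsets of a
5-element set, with edges between disjoint subsets. -/
def petersenGraph : SimpleGraph {s : Finset (Fin 5) // s.card = 2} where
  Adj a b := Disjoint a.1 b.1
  symm := ⟨fun a b h => h.symm⟩
  loopless := ⟨by
    intro a h
    rw [disjoint_self] at h
    have h2 := a.2
    rw [h] at h2
    simp at h2⟩

instance : DecidableRel petersenGraph.Adj :=
  fun a b => inferInstanceAs (Decidable (Disjoint a.1 b.1))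

/-- Abbreviation for a vertex of the Petersen graph. -/
def pv (a b : Fin 5) (h : ({a, b} : Finset (Fin 5)).card = 2 := by decide) :
    {s : Finset (Fin 5) // s.card = 2} := ⟨{a, b}, h⟩

lemma cycle5 {V : Type*} [DecidableEq V] {G : SimpleGraph V} {a b c d e : V}
    (h1 : G.Adj a b) (h2 : G.Adj b c) (h3 : G.Adj c d) (h4 : G.Adj d e) (h5 : G.Adj e a)
    (hnd : [a, b, c, d, e].Nodup) :
    ∃ p : G.Walk a a, p.IsCycle ∧ Odd p.length := by
  refine ⟨.cons h1 (.cons h2 (.cons h3 (.cons h4 (.cons h5 .nil)))), ?_, ⟨2, rfl⟩⟩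
  simp only [List.nodup_cons, List.mem_cons, List.mem_singleton, List.not_mem_nil,
    List.nodup_nil, or_false, not_or, and_true] at hnd
  obtain ⟨⟨hab, hac, had, hae⟩, ⟨hbc, hbd, hbe⟩, ⟨hcd, hce⟩, hde, -⟩ := hnd
  constructor
  · constructor
    · constructor
      simp only [SimpleGraph.Walk.edges_cons, SimpleGraph.Walk.edges_nil, List.nodup_cons,
        List.mem_cons, List.not_mem_nil, List.nodup_nil, or_false, not_or, and_true,
        Sym2.eq, Sym2.rel_iff', Prod.mk.injEq, Prod.swap_prod_mk]
      push_neg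
      refine ⟨⟨⟨?_,?_⟩,⟨?_,?_⟩,⟨?_,?_⟩,?_,?_⟩,⟨⟨?_,?_⟩,⟨?_,?_⟩,?_,?_⟩,⟨⟨?_,?_⟩,?_,?_⟩,?_,?_⟩ <;> tauto
    · simp
  · simp only [SimpleGraph.Walk.support_cons, SimpleGraph.Walk.support_nil, List.tail_cons,
      List.nodup_cons, List.mem_cons, List.not_mem_nil, List.nodup_nil, or_false, not_or,
      and_true, List.mem_singleton]
    refine ⟨⟨?_,?_,?_,?_⟩,⟨?_,?_,?_⟩,⟨?_,?_⟩,?_,?_⟩ <;> first | assumption | simp | (intro h; simp_all)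

/-- the Petersen graph has no even perfect matching: for every perfect
matching `M`, some cycle of the complement `G − M` has odd length. -/
theorem petersen_no_even_perfect_matching
    (M : petersenGraph.Subgraph) (hM : M.IsPerfectMatching) :
    ∃ (v : {s : Finset (Fin 5) // s.card = 2})
      (p : (petersenGraph.deleteEdges M.edgeSet).Walk v v),
      p.IsCycle ∧ Odd p.length := by
  classical
  obtain ⟨hm, hs⟩ := hM
  have key : ∀ v, ∃! w, M.Adj v w := fun v => hm (hs v)
  choose f hf huniq using key
  have hsymm : ∀ v, f (f v) = v := fun v => (huniq (f v) v ((hf v).symm)).symm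
  have hnb : ∀ v, petersenGraph.Adj v (f v) := fun v => M.adj_sub (hf v)
  have hadj : ∀ v w, petersenGraph.Adj v w → f v ≠ w →
      (petersenGraph.deleteEdges M.edgeSet).Adj v w := by
    intro v w h1 h2
    rw [SimpleGraph.deleteEdges_adj]
    exact ⟨h1, fun hmem => h2 (huniq v w (SimpleGraph.Subgraph.mem_edgeSet.mp hmem)).symm⟩
  have tri01 : f (pv 0 1) = (pv 2 3) ∨ f (pv 0 1) = (pv 2 4) ∨ f (pv 0 1) = (pv 3 4) := (by decide : ∀ w, petersenGraph.Adj (pv 0 1) w → w = (pv 2 3) ∨ w = (pv 2 4) ∨ w = (pv 3 4)) (f (pv 0 1)) (hnb (pv 0 1))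
  rcases tri01 with h01 | h01 | h01
  · have h23 : f (pv 2 3) = (pv 0 1) := by rw [← h01, hsymm]
    have tri04 : f (pv 0 4) = (pv 1 2) ∨ f (pv 0 4) = (pv 1 3) ∨ f (pv 0 4) = (pv 2 3) := (by decide : ∀ w, petersenGraph.Adj (pv 0 4) w → w = (pv 1 2) ∨ w = (pv 1 3) ∨ w = (pv 2 3)) (f (pv 0 4)) (hnb (pv 0 4))
    rcases tri04 with h04 | h04 | h04
    · have h12 : f (pv 1 2) = (pv 0 4) := by rw [← h04, hsymm]
      have tri34 : f (pv 3 4) = (pv 0 1) ∨ f (pv 3 4) = (pv 0 2) ∨ f (pv 3 4) = (pv 1 2) := (by decide : ∀ w, petersenGraph.Adj (pv 3 4) w → w = (pv 0 1) ∨ w = (pv 0 2) ∨ w = (pv 1 2)) (f (pv 3 4)) (hnb (pv 3 4))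
      have h34 : f (pv 3 4) = (pv 0 2) := by
        rcases tri34 with h | h | h
        · exact absurd (((h01).symm.trans (by rw [← h, hsymm])) : (pv 2 3) = (pv 3 4)) (by decide)
        · exact h
        · exact absurd (((h12).symm.trans (by rw [← h, hsymm])) : (pv 0 4) = (pv 3 4)) (by decide)
      have h02 : f (pv 0 2) = (pv 3 4) := by rw [← h34, hsymm]
      have tri13 : f (pv 1 3) = (pv 0 2) ∨ f (pv 1 3) = (pv 0 4) ∨ f (pv 1 3) = (pv 2 4) := (by decide : ∀ w, petersenGraph.Adj (pv 1 3) w → w = (pv 0 2) ∨ w = (pv 0 4) ∨ w = (pv 2 4)) (f (pv 1 3)) (hnb (pv 1 3))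
      have h13 : f (pv 1 3) = (pv 2 4) := by
        rcases tri13 with h | h | h
        · exact absurd (((h02).symm.trans (by rw [← h, hsymm])) : (pv 3 4) = (pv 1 3)) (by decide)
        · exact absurd (((h04).symm.trans (by rw [← h, hsymm])) : (pv 1 2) = (pv 1 3)) (by decide)
        · exact h
      have h24 : f (pv 2 4) = (pv 1 3) := by rw [← h13, hsymm]
      have tri14 : f (pv 1 4) = (pv 0 2) ∨ f (pv 1 4) = (pv 0 3) ∨ f (pv 1 4) = (pv 2 3) := (by decide : ∀ w, petersenGraph.Adj (pv 1 4) w → w = (pv 0 2) ∨ w = (pv 0 3) ∨ w = (pv 2 3)) (f (pv 1 4)) (hnb (pv 1 4))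
      have h14 : f (pv 1 4) = (pv 0 3) := by
        rcases tri14 with h | h | h
        · exact absurd (((h02).symm.trans (by rw [← h, hsymm])) : (pv 3 4) = (pv 1 4)) (by decide)
        · exact h
        · exact absurd (((h23).symm.trans (by rw [← h, hsymm])) : (pv 0 1) = (pv 1 4)) (by decide)
      have h03 : f (pv 0 3) = (pv 1 4) := by rw [← h14, hsymm]
      obtain ⟨p, hp⟩ := cycle5 (hadj (pv 0 2) (pv 1 3) (by decide) (by rw [h02]; decide)) (hadj (pv 1 3) (pv 0 4) (by decide) (by rw [h13]; decide)) (hadj (pv 0 4) (pv 2 3) (by decide) (by rw [h04]; decide)) (hadj (pv 2 3) (pv 1 4) (by decide) (by rw [h23]; decide)) (hadj (pv 1 4) (pv 0 2) (by decide) (by rw [h14]; decide)) (by decide)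
      exact ⟨(pv 0 2), p, hp⟩
    · have h13 : f (pv 1 3) = (pv 0 4) := by rw [← h04, hsymm]
      have tri24 : f (pv 2 4) = (pv 0 1) ∨ f (pv 2 4) = (pv 0 3) ∨ f (pv 2 4) = (pv 1 3) := (by decide : ∀ w, petersenGraph.Adj (pv 2 4) w → w = (pv 0 1) ∨ w = (pv 0 3) ∨ w = (pv 1 3)) (f (pv 2 4)) (hnb (pv 2 4))
      have h24 : f (pv 2 4) = (pv 0 3) := by
        rcases tri24 with h | h | h
        · exact absurd (((h01).symm.trans (by rw [← h, hsymm])) : (pv 2 3) = (pv 2 4)) (by decide)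
        · exact h
        · exact absurd (((h13).symm.trans (by rw [← h, hsymm])) : (pv 0 4) = (pv 2 4)) (by decide)
      have h03 : f (pv 0 3) = (pv 2 4) := by rw [← h24, hsymm]
      have tri12 : f (pv 1 2) = (pv 0 3) ∨ f (pv 1 2) = (pv 0 4) ∨ f (pv 1 2) = (pv 3 4) := (by decide : ∀ w, petersenGraph.Adj (pv 1 2) w → w = (pv 0 3) ∨ w = (pv 0 4) ∨ w = (pv 3 4)) (f (pv 1 2)) (hnb (pv 1 2))
      have h12 : f (pv 1 2) = (pv 3 4) := by
        rcases tri12 with h | h | h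
        · exact absurd (((h03).symm.trans (by rw [← h, hsymm])) : (pv 2 4) = (pv 1 2)) (by decide)
        · exact absurd (((h04).symm.trans (by rw [← h, hsymm])) : (pv 1 3) = (pv 1 2)) (by decide)
        · exact h
      have h34 : f (pv 3 4) = (pv 1 2) := by rw [← h12, hsymm]
      have tri14 : f (pv 1 4) = (pv 0 2) ∨ f (pv 1 4) = (pv 0 3) ∨ f (pv 1 4) = (pv 2 3) := (by decide : ∀ w, petersenGraph.Adj (pv 1 4) w → w = (pv 0 2) ∨ w = (pv 0 3) ∨ w = (pv 2 3)) (f (pv 1 4)) (hnb (pv 1 4))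
      have h14 : f (pv 1 4) = (pv 0 2) := by
        rcases tri14 with h | h | h
        · exact h
        · exact absurd (((h03).symm.trans (by rw [← h, hsymm])) : (pv 2 4) = (pv 1 4)) (by decide)
        · exact absurd (((h23).symm.trans (by rw [← h, hsymm])) : (pv 0 1) = (pv 1 4)) (by decide)
      have h02 : f (pv 0 2) = (pv 1 4) := by rw [← h14, hsymm]
      obtain ⟨p, hp⟩ := cycle5 (hadj (pv 0 1) (pv 2 4) (by decide) (by rw [h01]; decide)) (hadj (pv 2 4) (pv 1 3) (by decide) (by rw [h24]; decide)) (hadj (pv 1 3) (pv 0 2) (by decide) (by rw [h13]; decide)) (hadj (pv 0 2) (pv 3 4) (by decide) (by rw [h02]; decide)) (hadj (pv 3 4) (pv 0 1) (by decide) (by rw [h34]; decide)) (by decide)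
      exact ⟨(pv 0 1), p, hp⟩
    · exact absurd (((h23).symm.trans (by rw [← h04, hsymm])) : (pv 0 1) = (pv 0 4)) (by decide)
  · have h24 : f (pv 2 4) = (pv 0 1) := by rw [← h01, hsymm]
    have tri03 : f (pv 0 3) = (pv 1 2) ∨ f (pv 0 3) = (pv 1 4) ∨ f (pv 0 3) = (pv 2 4) := (by decide : ∀ w, petersenGraph.Adj (pv 0 3) w → w = (pv 1 2) ∨ w = (pv 1 4) ∨ w = (pv 2 4)) (f (pv 0 3)) (hnb (pv 0 3))
    rcases tri03 with h03 | h03 | h03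
    · have h12 : f (pv 1 2) = (pv 0 3) := by rw [← h03, hsymm]
      have tri34 : f (pv 3 4) = (pv 0 1) ∨ f (pv 3 4) = (pv 0 2) ∨ f (pv 3 4) = (pv 1 2) := (by decide : ∀ w, petersenGraph.Adj (pv 3 4) w → w = (pv 0 1) ∨ w = (pv 0 2) ∨ w = (pv 1 2)) (f (pv 3 4)) (hnb (pv 3 4))
      have h34 : f (pv 3 4) = (pv 0 2) := by
        rcases tri34 with h | h | h
        · exact absurd (((h01).symm.trans (by rw [← h, hsymm])) : (pv 2 4) = (pv 3 4)) (by decide)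
        · exact h
        · exact absurd (((h12).symm.trans (by rw [← h, hsymm])) : (pv 0 3) = (pv 3 4)) (by decide)
      have h02 : f (pv 0 2) = (pv 3 4) := by rw [← h34, hsymm]
      have tri13 : f (pv 1 3) = (pv 0 2) ∨ f (pv 1 3) = (pv 0 4) ∨ f (pv 1 3) = (pv 2 4) := (by decide : ∀ w, petersenGraph.Adj (pv 1 3) w → w = (pv 0 2) ∨ w = (pv 0 4) ∨ w = (pv 2 4)) (f (pv 1 3)) (hnb (pv 1 3))
      have h13 : f (pv 1 3) = (pv 0 4) := by
        rcases tri13 with h | h | h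
        · exact absurd (((h02).symm.trans (by rw [← h, hsymm])) : (pv 3 4) = (pv 1 3)) (by decide)
        · exact h
        · exact absurd (((h24).symm.trans (by rw [← h, hsymm])) : (pv 0 1) = (pv 1 3)) (by decide)
      have h04 : f (pv 0 4) = (pv 1 3) := by rw [← h13, hsymm]
      have tri14 : f (pv 1 4) = (pv 0 2) ∨ f (pv 1 4) = (pv 0 3) ∨ f (pv 1 4) = (pv 2 3) := (by decide : ∀ w, petersenGraph.Adj (pv 1 4) w → w = (pv 0 2) ∨ w = (pv 0 3) ∨ w = (pv 2 3)) (f (pv 1 4)) (hnb (pv 1 4))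
      have h14 : f (pv 1 4) = (pv 2 3) := by
        rcases tri14 with h | h | h
        · exact absurd (((h02).symm.trans (by rw [← h, hsymm])) : (pv 3 4) = (pv 1 4)) (by decide)
        · exact absurd (((h03).symm.trans (by rw [← h, hsymm])) : (pv 1 2) = (pv 1 4)) (by decide)
        · exact h
      have h23 : f (pv 2 3) = (pv 1 4) := by rw [← h14, hsymm]
      obtain ⟨p, hp⟩ := cycle5 (hadj (pv 0 1) (pv 2 3) (by decide) (by rw [h01]; decide)) (hadj (pv 2 3) (pv 0 4) (by decide) (by rw [h23]; decide)) (hadj (pv 0 4) (pv 1 2) (by decide) (by rw [h04]; decide)) (hadj (pv 1 2) (pv 3 4) (by decide) (by rw [h12]; decide)) (hadj (pv 3 4) (pv 0 1) (by decide) (by rw [h34]; decide)) (by decide)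
      exact ⟨(pv 0 1), p, hp⟩
    · have h14 : f (pv 1 4) = (pv 0 3) := by rw [← h03, hsymm]
      have tri23 : f (pv 2 3) = (pv 0 1) ∨ f (pv 2 3) = (pv 0 4) ∨ f (pv 2 3) = (pv 1 4) := (by decide : ∀ w, petersenGraph.Adj (pv 2 3) w → w = (pv 0 1) ∨ w = (pv 0 4) ∨ w = (pv 1 4)) (f (pv 2 3)) (hnb (pv 2 3))
      have h23 : f (pv 2 3) = (pv 0 4) := by
        rcases tri23 with h | h | h
        · exact absurd (((h01).symm.trans (by rw [← h, hsymm])) : (pv 2 4) = (pv 2 3)) (by decide)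
        · exact h
        · exact absurd (((h14).symm.trans (by rw [← h, hsymm])) : (pv 0 3) = (pv 2 3)) (by decide)
      have h04 : f (pv 0 4) = (pv 2 3) := by rw [← h23, hsymm]
      have tri12 : f (pv 1 2) = (pv 0 3) ∨ f (pv 1 2) = (pv 0 4) ∨ f (pv 1 2) = (pv 3 4) := (by decide : ∀ w, petersenGraph.Adj (pv 1 2) w → w = (pv 0 3) ∨ w = (pv 0 4) ∨ w = (pv 3 4)) (f (pv 1 2)) (hnb (pv 1 2))
      have h12 : f (pv 1 2) = (pv 3 4) := by
        rcases tri12 with h | h | h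
        · exact absurd (((h03).symm.trans (by rw [← h, hsymm])) : (pv 1 4) = (pv 1 2)) (by decide)
        · exact absurd (((h04).symm.trans (by rw [← h, hsymm])) : (pv 2 3) = (pv 1 2)) (by decide)
        · exact h
      have h34 : f (pv 3 4) = (pv 1 2) := by rw [← h12, hsymm]
      have tri13 : f (pv 1 3) = (pv 0 2) ∨ f (pv 1 3) = (pv 0 4) ∨ f (pv 1 3) = (pv 2 4) := (by decide : ∀ w, petersenGraph.Adj (pv 1 3) w → w = (pv 0 2) ∨ w = (pv 0 4) ∨ w = (pv 2 4)) (f (pv 1 3)) (hnb (pv 1 3))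
      have h13 : f (pv 1 3) = (pv 0 2) := by
        rcases tri13 with h | h | h
        · exact h
        · exact absurd (((h04).symm.trans (by rw [← h, hsymm])) : (pv 2 3) = (pv 1 3)) (by decide)
        · exact absurd (((h24).symm.trans (by rw [← h, hsymm])) : (pv 0 1) = (pv 1 3)) (by decide)
      have h02 : f (pv 0 2) = (pv 1 3) := by rw [← h13, hsymm]
      obtain ⟨p, hp⟩ := cycle5 (hadj (pv 0 1) (pv 2 3) (by decide) (by rw [h01]; decide)) (hadj (pv 2 3) (pv 1 4) (by decide) (by rw [h23]; decide)) (hadj (pv 1 4) (pv 0 2) (by decide) (by rw [h14]; decide)) (hadj (pv 0 2) (pv 3 4) (by decide) (by rw [h02]; decide)) (hadj (pv 3 4) (pv 0 1) (by decide) (by rw [h34]; decide)) (by decide)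
      exact ⟨(pv 0 1), p, hp⟩
    · exact absurd (((h24).symm.trans (by rw [← h03, hsymm])) : (pv 0 1) = (pv 0 3)) (by decide)
  · have h34 : f (pv 3 4) = (pv 0 1) := by rw [← h01, hsymm]
    have tri02 : f (pv 0 2) = (pv 1 3) ∨ f (pv 0 2) = (pv 1 4) ∨ f (pv 0 2) = (pv 3 4) := (by decide : ∀ w, petersenGraph.Adj (pv 0 2) w → w = (pv 1 3) ∨ w = (pv 1 4) ∨ w = (pv 3 4)) (f (pv 0 2)) (hnb (pv 0 2))
    rcases tri02 with h02 | h02 | h02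
    · have h13 : f (pv 1 3) = (pv 0 2) := by rw [← h02, hsymm]
      have tri24 : f (pv 2 4) = (pv 0 1) ∨ f (pv 2 4) = (pv 0 3) ∨ f (pv 2 4) = (pv 1 3) := (by decide : ∀ w, petersenGraph.Adj (pv 2 4) w → w = (pv 0 1) ∨ w = (pv 0 3) ∨ w = (pv 1 3)) (f (pv 2 4)) (hnb (pv 2 4))
      have h24 : f (pv 2 4) = (pv 0 3) := by
        rcases tri24 with h | h | h
        · exact absurd (((h01).symm.trans (by rw [← h, hsymm])) : (pv 3 4) = (pv 2 4)) (by decide)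
        · exact h
        · exact absurd (((h13).symm.trans (by rw [← h, hsymm])) : (pv 0 2) = (pv 2 4)) (by decide)
      have h03 : f (pv 0 3) = (pv 2 4) := by rw [← h24, hsymm]
      have tri12 : f (pv 1 2) = (pv 0 3) ∨ f (pv 1 2) = (pv 0 4) ∨ f (pv 1 2) = (pv 3 4) := (by decide : ∀ w, petersenGraph.Adj (pv 1 2) w → w = (pv 0 3) ∨ w = (pv 0 4) ∨ w = (pv 3 4)) (f (pv 1 2)) (hnb (pv 1 2))
      have h12 : f (pv 1 2) = (pv 0 4) := by
        rcases tri12 with h | h | h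
        · exact absurd (((h03).symm.trans (by rw [← h, hsymm])) : (pv 2 4) = (pv 1 2)) (by decide)
        · exact h
        · exact absurd (((h34).symm.trans (by rw [← h, hsymm])) : (pv 0 1) = (pv 1 2)) (by decide)
      have h04 : f (pv 0 4) = (pv 1 2) := by rw [← h12, hsymm]
      have tri14 : f (pv 1 4) = (pv 0 2) ∨ f (pv 1 4) = (pv 0 3) ∨ f (pv 1 4) = (pv 2 3) := (by decide : ∀ w, petersenGraph.Adj (pv 1 4) w → w = (pv 0 2) ∨ w = (pv 0 3) ∨ w = (pv 2 3)) (f (pv 1 4)) (hnb (pv 1 4))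
      have h14 : f (pv 1 4) = (pv 2 3) := by
        rcases tri14 with h | h | h
        · exact absurd (((h02).symm.trans (by rw [← h, hsymm])) : (pv 1 3) = (pv 1 4)) (by decide)
        · exact absurd (((h03).symm.trans (by rw [← h, hsymm])) : (pv 2 4) = (pv 1 4)) (by decide)
        · exact h
      have h23 : f (pv 2 3) = (pv 1 4) := by rw [← h14, hsymm]
      obtain ⟨p, hp⟩ := cycle5 (hadj (pv 0 1) (pv 2 3) (by decide) (by rw [h01]; decide)) (hadj (pv 2 3) (pv 0 4) (by decide) (by rw [h23]; decide)) (hadj (pv 0 4) (pv 1 3) (by decide) (by rw [h04]; decide)) (hadj (pv 1 3) (pv 2 4) (by decide) (by rw [h13]; decide)) (hadj (pv 2 4) (pv 0 1) (by decide) (by rw [h24]; decide)) (by decide)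
      exact ⟨(pv 0 1), p, hp⟩
    · have h14 : f (pv 1 4) = (pv 0 2) := by rw [← h02, hsymm]
      have tri23 : f (pv 2 3) = (pv 0 1) ∨ f (pv 2 3) = (pv 0 4) ∨ f (pv 2 3) = (pv 1 4) := (by decide : ∀ w, petersenGraph.Adj (pv 2 3) w → w = (pv 0 1) ∨ w = (pv 0 4) ∨ w = (pv 1 4)) (f (pv 2 3)) (hnb (pv 2 3))
      have h23 : f (pv 2 3) = (pv 0 4) := by
        rcases tri23 with h | h | h
        · exact absurd (((h01).symm.trans (by rw [← h, hsymm])) : (pv 3 4) = (pv 2 3)) (by decide)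
        · exact h
        · exact absurd (((h14).symm.trans (by rw [← h, hsymm])) : (pv 0 2) = (pv 2 3)) (by decide)
      have h04 : f (pv 0 4) = (pv 2 3) := by rw [← h23, hsymm]
      have tri12 : f (pv 1 2) = (pv 0 3) ∨ f (pv 1 2) = (pv 0 4) ∨ f (pv 1 2) = (pv 3 4) := (by decide : ∀ w, petersenGraph.Adj (pv 1 2) w → w = (pv 0 3) ∨ w = (pv 0 4) ∨ w = (pv 3 4)) (f (pv 1 2)) (hnb (pv 1 2))
      have h12 : f (pv 1 2) = (pv 0 3) := by
        rcases tri12 with h | h | h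
        · exact h
        · exact absurd (((h04).symm.trans (by rw [← h, hsymm])) : (pv 2 3) = (pv 1 2)) (by decide)
        · exact absurd (((h34).symm.trans (by rw [← h, hsymm])) : (pv 0 1) = (pv 1 2)) (by decide)
      have h03 : f (pv 0 3) = (pv 1 2) := by rw [← h12, hsymm]
      have tri13 : f (pv 1 3) = (pv 0 2) ∨ f (pv 1 3) = (pv 0 4) ∨ f (pv 1 3) = (pv 2 4) := (by decide : ∀ w, petersenGraph.Adj (pv 1 3) w → w = (pv 0 2) ∨ w = (pv 0 4) ∨ w = (pv 2 4)) (f (pv 1 3)) (hnb (pv 1 3))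
      have h13 : f (pv 1 3) = (pv 2 4) := by
        rcases tri13 with h | h | h
        · exact absurd (((h02).symm.trans (by rw [← h, hsymm])) : (pv 1 4) = (pv 1 3)) (by decide)
        · exact absurd (((h04).symm.trans (by rw [← h, hsymm])) : (pv 2 3) = (pv 1 3)) (by decide)
        · exact h
      have h24 : f (pv 2 4) = (pv 1 3) := by rw [← h13, hsymm]
      obtain ⟨p, hp⟩ := cycle5 (hadj (pv 0 2) (pv 1 3) (by decide) (by rw [h02]; decide)) (hadj (pv 1 3) (pv 0 4) (by decide) (by rw [h13]; decide)) (hadj (pv 0 4) (pv 1 2) (by decide) (by rw [h04]; decide)) (hadj (pv 1 2) (pv 3 4) (by decide) (by rw [h12]; decide)) (hadj (pv 3 4) (pv 0 2) (by decide) (by rw [h34]; decide)) (by decide)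
      exact ⟨(pv 0 2), p, hp⟩
    · exact absurd (((h34).symm.trans (by rw [← h02, hsymm])) : (pv 0 1) = (pv 0 2)) (by decide)
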